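/- Let R be a *-ring and p, q projectors with p - q Moore-Penrose invertible. Then (p-q)†p(1-q) = (1-q)p(p-q)†. -/
import Mathlib


/-- `b` is a Moore-Penrose inverse of `a`. -/
def IsMP {R : Type*} [Ring R] [StarRing R] (a b : R) : Prop :=
  a * b * a = a ∧ b * a * b = b ∧ star (a * b) = a * b ∧ star (b * a) = b * a

/-- `p` is a projector: `p² = p = p*`. -/
def IsProjector {R : Type*} [Ring R] [StarRing R] (p : R) : Prop :=
  p * p = p ∧ star p = p

/-- `a` is *-cancellable. -/
def StarCancellable {R : Type*} [Ring R] [StarRing R] (a : R) : Prop :=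
  (∀ x : R, star a * a * x = 0 → a * x = 0) ∧ (∀ x : R, x * (a * star a) = 0 → x * a = 0)

private lemma mp_unique {R : Type*} [Ring R] [StarRing R] {a b c : R}
    (hb : IsMP a b) (hc : IsMP a c) : b = c := by
  obtain ⟨hb1, hb2, hb3, hb4⟩ := hb
  obtain ⟨hc1, hc2, hc3, hc4⟩ := hc
  have hab : a * b = a * c := by
    calc a * b = (a * c * a) * b := by rw [hc1]
      _ = (a * c) * (a * b) := by noncomm_ring
      _ = star (a * c) * star (a * b) := by rw [hc3, hb3]
      _ = star ((a * b) * (a * c)) := (star_mul _ _).symm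
      _ = star ((a * b * a) * c) := by
            rw [show (a * b) * (a * c) = (a * b * a) * c by noncomm_ring]
      _ = star (a * c) := by rw [hb1]
      _ = a * c := hc3
  have hba : b * a = c * a := by
    calc b * a = b * (a * c * a) := by rw [hc1]
      _ = (b * a) * (c * a) := by noncomm_ring
      _ = star (b * a) * star (c * a) := by rw [hb4, hc4]
      _ = star ((c * a) * (b * a)) := (star_mul _ _).symm
      _ = star (c * (a * b * a)) := by
            rw [show (c * a) * (b * a) = c * (a * b * a) by noncomm_ring]
      _ = star (c * a) := by rw [hb1]
      _ = c * a := hc4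
  calc b = b * a * b := hb2.symm
    _ = (c * a) * b := by rw [hba]
    _ = c * (a * b) := by rw [mul_assoc]
    _ = c * (a * c) := by rw [hab]
    _ = c * a * c := by rw [← mul_assoc]
    _ = c := hc2

theorem stmt12 {R : Type*} [Ring R] [StarRing R] (p q d : R)
    (hp : IsProjector p) (hq : IsProjector q)
    (hd : IsMP (p - q) d) :
    (d * p) * (1 - q) = (1 - q) * (p * d) := by
  obtain ⟨hp1, hp2⟩ := hp
  obtain ⟨hq1, hq2⟩ := hq
  set a := p - q with ha
  have hsa : star a = a := by rw [ha, star_sub, hp2, hq2]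
  -- d commutes with a (via self-adjointness of d, from uniqueness of the MP inverse)
  have key1 : a * star d = d * a := by rw [← hd.2.2.2, star_mul, hsa]
  have key2 : star d * a = a * d := by rw [← hd.2.2.1, star_mul, hsa]
  have c1 : a * star d * a = a := by
    apply star_injective
    simp only [star_mul, star_star, hsa]
    rw [← mul_assoc]
    exact hd.1
  have c2 : star d * a * star d = star d := by
    apply star_injective
    simp only [star_mul, star_star, hsa]
    rw [← mul_assoc]
    exact hd.2.1
  have c3 : star (a * star d) = a * star d := by rw [key1]; exact hd.2.2.2
  have c4 : star (star d * a) = star d * a := by rw [key2]; exact hd.2.2.1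
  have hds : d = star d := mp_unique hd ⟨c1, c2, c3, c4⟩
  have comm : a * d = d * a := by
    conv_lhs => rw [hds]
    exact key1
  have hse : star (a * d) = a * d := hd.2.2.1
  -- q commutes with a * a
  have hqx : q * (a * a) = (a * a) * q := by
    have h : q * (a * a) - (a * a) * q
        = q * (p * p - p) - (q * q - q) * p - (p * p - p) * q + p * (q * q - q) := by
      rw [ha]; noncomm_ring
    rw [hp1, hq1] at h
    simp only [sub_self, mul_zero, zero_mul, sub_zero, zero_sub, neg_zero, add_zero,
      zero_add] at h
    exact sub_eq_zero.mp h
  have hee : (a * d) * (a * d) = a * d := by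
    calc (a * d) * (a * d) = (a * d * a) * d := by noncomm_ring
      _ = a * d := by rw [hd.1]
  have hxd : (a * a) * (d * d) = a * d := by
    calc (a * a) * (d * d) = a * ((a * d) * d) := by noncomm_ring
      _ = a * ((d * a) * d) := by rw [comm]
      _ = (a * d) * (a * d) := by noncomm_ring
      _ = a * d := hee
  have hdx : (d * d) * (a * a) = a * d := by
    calc (d * d) * (a * a) = d * ((d * a) * a) := by noncomm_ring
      _ = d * ((a * d) * a) := by rw [comm]
      _ = d * a := by rw [show (a * d) * a = a * d * a from rfl, hd.1]
      _ = a * d := comm.symm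
  have ha2 : a * (a * d) = a := by
    calc a * (a * d) = a * (d * a) := by rw [comm]
      _ = (a * d) * a := by noncomm_ring
      _ = a := hd.1
  have haa : (a * a) * (a * d) = a * a := by
    calc (a * a) * (a * d) = a * (a * (a * d)) := by noncomm_ring
      _ = a * a := by rw [ha2]
  have hA : (d * d) * (q * (a * d)) = ((a * d) * q) * (d * d) := by
    calc (d * d) * (q * (a * d)) = (d * d) * (q * ((a * a) * (d * d))) := by rw [hxd]
      _ = (d * d) * (q * (a * a)) * (d * d) := by noncomm_ring
      _ = (d * d) * ((a * a) * q) * (d * d) := by rw [hqx]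
      _ = ((d * d) * (a * a)) * (q * (d * d)) := by noncomm_ring
      _ = (a * d) * (q * (d * d)) := by rw [hdx]
      _ = ((a * d) * q) * (d * d) := by noncomm_ring
  have hB : (a * d) * (q * (a * d)) = q * (a * d) := by
    calc (a * d) * (q * (a * d)) = ((a * a) * (d * d)) * (q * (a * d)) := by rw [hxd]
      _ = (a * a) * ((d * d) * (q * (a * d))) := by
            rw [mul_assoc (a * a) (d * d) (q * (a * d))]
      _ = (a * a) * (((a * d) * q) * (d * d)) := by rw [hA]
      _ = ((a * a) * (a * d)) * (q * (d * d)) := by noncomm_ring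
      _ = (a * a) * (q * (d * d)) := by rw [haa]
      _ = ((a * a) * q) * (d * d) := by noncomm_ring
      _ = (q * (a * a)) * (d * d) := by rw [hqx]
      _ = q * ((a * a) * (d * d)) := by rw [mul_assoc q (a * a) (d * d)]
      _ = q * (a * d) := by rw [hxd]
  have hC : ((a * d) * q) * (a * d) = (a * d) * q := by
    have h := congrArg star hB
    simp only [star_mul, hq2, hse] at h
    exact h
  have hF3 : (a * d) * q = q * (a * d) := by
    rw [← hC, mul_assoc (a * d) q (a * d), hB]
  have hq0 : q * (1 - q) = 0 := by rw [mul_sub q 1 q, mul_one, hq1, sub_self]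
  have h0q : (1 - q) * q = 0 := by rw [sub_mul 1 q q, one_mul, hq1, sub_self]
  have F1 : a * (1 - q) = p * (1 - q) := by rw [ha, sub_mul p q (1 - q), hq0, sub_zero]
  have F2 : (1 - q) * a = (1 - q) * p := by rw [ha, mul_sub (1 - q) p q, h0q, sub_zero]
  calc (d * p) * (1 - q) = d * (p * (1 - q)) := by rw [mul_assoc]
    _ = d * (a * (1 - q)) := by rw [F1]
    _ = (d * a) * (1 - q) := by rw [← mul_assoc d a (1 - q)]
    _ = (a * d) * (1 - q) := by rw [comm]
    _ = a * d - (a * d) * q := by rw [mul_sub (a * d) 1 q, mul_one]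
    _ = a * d - q * (a * d) := by rw [hF3]
    _ = (1 - q) * (a * d) := by rw [sub_mul 1 q (a * d), one_mul]
    _ = ((1 - q) * a) * d := by rw [← mul_assoc (1 - q) a d]
    _ = ((1 - q) * p) * d := by rw [F2]
    _ = (1 - q) * (p * d) := by rw [mul_assoc]
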